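/- For every integer k ≥ 2, the function g(x) = x^{4k} / ((2x+1)^{2k-2}·(112x^2 - 5)) is monotone increasing on [1/4, ∞) ∩ {x : 112x^2 > 5}; more precisely, on the interval x ≥ 1/4 where 112x^2 - 5 > 0, the derivative of g has the same sign as 112k·x^3 + (112k-56)·x^2 - (5k+5)·x - 5k, which is positive. -/

import Mathlib

/-- For `k ≥ 2`, on the interval `x ≥ 1/4` (where `112x² - 5 > 0`), the function
`g(x) = x^{4k} / ((2x+1)^{2k-2}·(112x²-5))` is strictly increasing; more precisely,
its derivative exists and has the same sign as
`p_k(x) = 112k·x³ + (112k-56)·x² - (5k+5)·x - 5k`, which is positive. -/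
theorem beachball_mono (k : ℕ) (hk : 2 ≤ k) :
    (∀ x ∈ Set.Ici (1 / 4 : ℝ), 0 < 112 * x ^ 2 - 5) ∧
    StrictMonoOn (fun x : ℝ => x ^ (4 * k) / ((2 * x + 1) ^ (2 * k - 2) * (112 * x ^ 2 - 5)))
      (Set.Ici (1 / 4 : ℝ)) ∧
    ∀ x ∈ Set.Ici (1 / 4 : ℝ), ∃ d : ℝ,
      HasDerivAt (fun x : ℝ => x ^ (4 * k) / ((2 * x + 1) ^ (2 * k - 2) * (112 * x ^ 2 - 5)))
        d x ∧
      (0 < d ↔ 0 < 112 * k * x ^ 3 + (112 * k - 56) * x ^ 2 - (5 * k + 5) * x - 5 * k) ∧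
      0 < 112 * k * x ^ 3 + (112 * k - 56) * x ^ 2 - (5 * k + 5) * x - 5 * k := by
  obtain ⟨m, rfl⟩ : ∃ m, k = m + 2 := ⟨k - 2, by omega⟩
  have hmc : (0:ℝ) ≤ m := Nat.cast_nonneg m
  -- abbreviations
  have h1 : ∀ x ∈ Set.Ici (1 / 4 : ℝ), 0 < 112 * x ^ 2 - 5 := by
    intro x hx
    simp only [Set.mem_Ici] at hx
    nlinarith [sq_nonneg (x - 1/4)]
  have hpos : ∀ x ∈ Set.Ici (1 / 4 : ℝ),
      0 < 112 * ((m:ℝ)+2) * x ^ 3 + (112 * ((m:ℝ)+2) - 56) * x ^ 2 - (5 * ((m:ℝ)+2) + 5) * x - 5 * ((m:ℝ)+2) := by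
    intro x hx
    simp only [Set.mem_Ici] at hx
    have hx0 : (0:ℝ) < x := by linarith
    nlinarith [mul_nonneg (sub_nonneg.2 hx) (sub_nonneg.2 hx), mul_nonneg hmc (sub_nonneg.2 hx),
      mul_nonneg (mul_nonneg hmc (sub_nonneg.2 hx)) (sub_nonneg.2 hx),
      mul_nonneg (mul_nonneg (sub_nonneg.2 hx) (sub_nonneg.2 hx)) (sub_nonneg.2 hx)]
  have key : ∀ x ∈ Set.Ici (1 / 4 : ℝ),
      HasDerivAt (fun x : ℝ => x ^ (4 * (m+2)) / ((2 * x + 1) ^ (2 * (m+2) - 2) * (112 * x ^ 2 - 5)))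
        ((4 * (112 * ((m:ℝ)+2) * x ^ 3 + (112 * ((m:ℝ)+2) - 56) * x ^ 2 - (5 * ((m:ℝ)+2) + 5) * x - 5 * ((m:ℝ)+2))
          * x ^ (4*m+7) * (2*x+1) ^ (2*m+1))
          / ((2 * x + 1) ^ (2 * m + 2) * (112 * x ^ 2 - 5)) ^ 2) x := by
    intro x hx
    have hxm : (1/4 : ℝ) ≤ x := hx
    have hx0 : (0:ℝ) < x := by linarith
    have h2x : (0:ℝ) < 2*x+1 := by linarith
    have hq : (0:ℝ) < 112 * x ^ 2 - 5 := h1 x hx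
    have hD : (2 * x + 1) ^ (2 * m + 2) * (112 * x ^ 2 - 5) ≠ 0 :=
      ne_of_gt (mul_pos (pow_pos h2x _) hq)
    have e1 : 4 * (m+2) = (4*m+7) + 1 := by ring
    have e2 : 2 * (m+2) - 2 = 2*m + 2 := by omega
    have hN : HasDerivAt (fun x : ℝ => x ^ (4 * (m+2))) ((4*(m:ℝ)+8) * x ^ (4*m+7)) x := by
      have h := hasDerivAt_pow (4*(m+2)) x
      refine h.congr_deriv ?_
      rw [show 4*(m+2)-1 = 4*m+7 from by omega]
      push_cast; ring
    have hlin : HasDerivAt (fun x : ℝ => 2*x+1) 2 x := by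
      simpa using ((hasDerivAt_id x).const_mul 2).add_const 1
    have hP : HasDerivAt (fun x : ℝ => (2*x+1) ^ (2*m+2)) ((2*(m:ℝ)+2) * (2*x+1)^(2*m+1) * 2) x := by
      have h := (hasDerivAt_pow (2*m+2) (2*x+1)).comp x hlin
      refine h.congr_deriv ?_
      rw [show 2*m+2-1 = 2*m+1 from by omega]
      push_cast; ring
    have hQ : HasDerivAt (fun x : ℝ => 112 * x ^ 2 - 5) (224 * x) x := by
      have := ((hasDerivAt_pow 2 x).const_mul 112).sub_const 5
      refine this.congr_deriv ?_; push_cast; ring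
    have hD' := hP.mul hQ
    have hf := hN.div hD' hD
    rw [e2]
    refine hf.congr_deriv ?_
    simp only [Pi.mul_apply]
    rw [div_eq_div_iff (by positivity) (by positivity)]
    ring
  refine ⟨h1, ?_, ?_⟩
  · have hcont : ContinuousOn (fun x : ℝ => x ^ (4 * (m+2)) / ((2 * x + 1) ^ (2 * (m+2) - 2) * (112 * x ^ 2 - 5))) (Set.Ici (1/4:ℝ)) := by
      intro x hx
      exact ((key x hx).continuousAt).continuousWithinAt
    apply strictMonoOn_of_deriv_pos (convex_Ici _) hcont
    intro x hx
    rw [interior_Ici] at hx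
    have hx' : x ∈ Set.Ici (1/4:ℝ) := Set.mem_Ici.2 (le_of_lt (Set.mem_Ioi.1 hx))
    rw [(key x hx').deriv]
    have hx0 : (0:ℝ) < x := by have : (1/4:ℝ) ≤ x := hx'; linarith
    have h2x : (0:ℝ) < 2*x+1 := by linarith
    have hq := h1 x hx'
    have hp := hpos x hx'
    positivity
  · intro x hx
    refine ⟨_, key x hx, ?_, by push_cast; exact hpos x hx⟩
    have hx0 : (0:ℝ) < x := by have : (1/4:ℝ) ≤ x := hx; linarith
    have h2x : (0:ℝ) < 2*x+1 := by linarith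
    have hq := h1 x hx
    push_cast
    constructor
    · intro hd
      by_contra hnp
      push_neg at hnp
      have : ¬ (0 < (4 * (112 * ((m:ℝ)+2) * x ^ 3 + (112 * ((m:ℝ)+2) - 56) * x ^ 2 - (5 * ((m:ℝ)+2) + 5) * x - 5 * ((m:ℝ)+2))
          * x ^ (4*m+7) * (2*x+1) ^ (2*m+1))
          / ((2 * x + 1) ^ (2 * m + 2) * (112 * x ^ 2 - 5)) ^ 2) := by
        apply not_lt.2
        apply div_nonpos_of_nonpos_of_nonneg
        · have h4 : (4 * (112 * ((m:ℝ)+2) * x ^ 3 + (112 * ((m:ℝ)+2) - 56) * x ^ 2 - (5 * ((m:ℝ)+2) + 5) * x - 5 * ((m:ℝ)+2))) ≤ 0 := by linarith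
          exact mul_nonpos_of_nonpos_of_nonneg (mul_nonpos_of_nonpos_of_nonneg h4 (le_of_lt (pow_pos hx0 _))) (le_of_lt (pow_pos h2x _))
        · positivity
      exact this hd
    · intro hp
      positivity
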